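/- The sequence n ↦ λ₁(F₁, 0ⁿ) is strictly decreasing and converges to -λ* as n → ∞. -/

import Mathlib

/-- A rooted graph: a finite simple graph with a distinguished root vertex. -/
structure RootedGraph where
  V : Type
  [fintypeV : Fintype V]
  G : SimpleGraph V
  root : V

attribute [instance] RootedGraph.fintypeV

/-- One-step extension of a rooted graph: attach a new path vertex (the new root)
to the old root, together with a clique of `k` new vertices each adjacent to
both the old root and the new path vertex. -/
def RootedGraph.extend (F : RootedGraph) (k : ℕ) : RootedGraph where
  V := F.V ⊕ Option (Fin k)
  G :=
    { Adj := fun a b =>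
        match a, b with
        | Sum.inl u, Sum.inl w => F.G.Adj u w
        | Sum.inl u, Sum.inr _ => u = F.root
        | Sum.inr _, Sum.inl w => w = F.root
        | Sum.inr x, Sum.inr y => x ≠ y
      symm := by
        constructor
        rintro (u | x) (w | y) h
        · exact F.G.adj_symm h
        · exact h
        · exact h
        · exact h.symm
      loopless := by
        constructor
        rintro (u | x) h
        · exact F.G.ne_of_adj h rfl
        · exact h rfl }
  root := Sum.inr none

/-- The rowing graph `(F, a)`. -/
def RootedGraph.rowing (F : RootedGraph) (a : List ℕ) : RootedGraph :=
  a.foldl RootedGraph.extend F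

open scoped Classical in
/-- Adjacency matrix of (the graph of) a rooted graph. -/
noncomputable def RootedGraph.adjMat (F : RootedGraph) : Matrix F.V F.V ℝ :=
  Matrix.of fun u v => if F.G.Adj u v then 1 else 0

/-- The smallest adjacency eigenvalue of a rooted graph. -/
noncomputable def RootedGraph.lam1 (F : RootedGraph) : ℝ :=
  sInf {t : ℝ | ∃ x : F.V → ℝ, x ≠ 0 ∧ F.adjMat.mulVec x = t • x}

/-- `F₁`: the path on 4 vertices `u₁u₂u₃u₄` rooted at `u₃`. -/
def F1 : RootedGraph := { V := Fin 4, G := SimpleGraph.pathGraph 4, root := 2 }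

/-- `F₂`: the fan consisting of a path `p₁p₂p₃p₄` (vertices `0,1,2,3`) together with an
apex `r` (vertex `4`) adjacent to `p₁, p₂, p₃, p₄`, rooted at the apex `r`. -/
def F2 : RootedGraph :=
  { V := Fin 5,
    G := SimpleGraph.fromRel fun i j => (i.val + 1 = j.val ∧ j.val ≤ 3) ∨ i.val = 4,
    root := 4 }

/-- `F₃`: the path on 6 vertices `w₁w₂w₃w₄w₅w₆` rooted at `w₅`. -/
def F3 : RootedGraph := { V := Fin 6, G := SimpleGraph.pathGraph 6, root := 4 }

open Matrix Finset
open scoped Classical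


private lemma sum_dot {ι V : Type} [Fintype V] (s : Finset ι) (f : ι → V → ℝ) (w : V → ℝ) :
    (∑ j ∈ s, f j) ⬝ᵥ w = ∑ j ∈ s, (f j ⬝ᵥ w) := by
  simp only [dotProduct, Finset.sum_apply, Finset.sum_mul]
  exact Finset.sum_comm

private lemma mulVec_sum' {ι V : Type} [Fintype V] (s : Finset ι) (A : Matrix V V ℝ)
    (f : ι → V → ℝ) : A.mulVec (∑ j ∈ s, f j) = ∑ j ∈ s, A.mulVec (f j) := by
  ext v
  simp only [Matrix.mulVec, dotProduct, Finset.sum_apply, Finset.mul_sum]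
  exact Finset.sum_comm

lemma exists_min_eigen {V : Type} [Fintype V] [DecidableEq V] [Nonempty V]
    (A : Matrix V V ℝ) (hA : A.IsHermitian) :
    ∃ t : ℝ,
      (∃ x : V → ℝ, x ≠ 0 ∧ A.mulVec x = t • x) ∧
      (∀ s : ℝ, ∀ x : V → ℝ, x ≠ 0 → A.mulVec x = s • x → t ≤ s) ∧
      (∀ x : V → ℝ, t * (x ⬝ᵥ x) ≤ x ⬝ᵥ (A.mulVec x)) ∧
      (∀ x : V → ℝ, x ⬝ᵥ (A.mulVec x) = t * (x ⬝ᵥ x) → A.mulVec x = t • x) := by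
  classical
  set b := hA.eigenvectorBasis with hb
  obtain ⟨i₀, -, hi₀⟩ := Finset.exists_min_image Finset.univ hA.eigenvalues ⟨Classical.arbitrary V, mem_univ _⟩
  set t := hA.eigenvalues i₀ with ht
  have hmin : ∀ j, t ≤ hA.eigenvalues j := fun j => hi₀ j (mem_univ j)
  have heig : ∀ j, A.mulVec (b j : V → ℝ) = hA.eigenvalues j • (b j : V → ℝ) :=
    fun j => hA.mulVec_eigenvectorBasis j
  have hrepr : ∀ (x : V → ℝ) (j : V), b.repr (WithLp.toLp 2 x) j = (b j : V → ℝ) ⬝ᵥ x := by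
    intro x j
    rw [OrthonormalBasis.repr_apply_apply]
    simp [PiLp.inner_apply, dotProduct, mul_comm]
  have hsum : ∀ x : V → ℝ, ∑ j, b.repr (WithLp.toLp 2 x) j • (b j : V → ℝ) = x := fun x => by simpa [WithLp.ofLp_sum] using congrArg WithLp.ofLp (b.sum_repr (WithLp.toLp 2 x))
  have hdotA : ∀ (x : V → ℝ) (j : V), (b j : V → ℝ) ⬝ᵥ (A.mulVec x) = hA.eigenvalues j * ((b j : V → ℝ) ⬝ᵥ x) := by
    intro x j
    have h1 : (b j : V → ℝ) ⬝ᵥ (A.mulVec x) = (A.mulVec (b j) : V → ℝ) ⬝ᵥ x := by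
      rw [Matrix.dotProduct_mulVec, ← Matrix.mulVec_transpose]
      congr 1
      rw [show Aᵀ = A from by rw [← Matrix.conjTranspose_eq_transpose_of_trivial]; exact hA]
    rw [h1, heig j, smul_dotProduct, smul_eq_mul]
  have hdexp : ∀ (x w : V → ℝ), x ⬝ᵥ w = ∑ j, b.repr (WithLp.toLp 2 x) j * ((b j : V → ℝ) ⬝ᵥ w) := by
    intro x w
    conv_lhs => rw [← hsum x]
    rw [sum_dot]
    exact Finset.sum_congr rfl fun j _ => by rw [smul_dotProduct, smul_eq_mul]
  have hxAx : ∀ x : V → ℝ, x ⬝ᵥ (A.mulVec x) = ∑ j, hA.eigenvalues j * (b.repr (WithLp.toLp 2 x) j)^2 := by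
    intro x
    rw [hdexp x (A.mulVec x)]
    refine Finset.sum_congr rfl fun j _ => ?_
    rw [hdotA, hrepr]
    ring
  have hxx : ∀ x : V → ℝ, x ⬝ᵥ x = ∑ j, (b.repr (WithLp.toLp 2 x) j)^2 := by
    intro x
    rw [hdexp x x]
    refine Finset.sum_congr rfl fun j _ => ?_
    rw [← hrepr, sq]
  refine ⟨t, ⟨b i₀, by simpa using b.orthonormal.ne_zero i₀, heig i₀⟩, ?_, ?_, ?_⟩
  · intro s x hx hAx
    obtain ⟨j, hj⟩ : ∃ j, b.repr (WithLp.toLp 2 x) j ≠ 0 := by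
      by_contra h
      push_neg at h
      apply hx
      rw [← hsum x]
      simp [h]
    have h1 : (b j : V → ℝ) ⬝ᵥ (A.mulVec x) = s * ((b j : V → ℝ) ⬝ᵥ x) := by
      rw [hAx, dotProduct_smul, smul_eq_mul]
    rw [hdotA] at h1
    rw [hrepr] at hj
    have h2 : hA.eigenvalues j = s := by
      have := mul_right_cancel₀ hj h1
      exact this
    exact h2 ▸ hmin j
  · intro x
    rw [hxAx, hxx, Finset.mul_sum]
    exact Finset.sum_le_sum fun j _ => mul_le_mul_of_nonneg_right (hmin j) (sq_nonneg _)
  · intro x hx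
    have hzero : ∀ j ∈ Finset.univ, (hA.eigenvalues j - t) * (b.repr (WithLp.toLp 2 x) j)^2 = 0 := by
      have hsum0 : ∑ j, (hA.eigenvalues j - t) * (b.repr (WithLp.toLp 2 x) j)^2 = 0 := by
        have h3 := hxAx x
        rw [hx, hxx, Finset.mul_sum] at h3
        have h2 : ∑ j, (hA.eigenvalues j - t) * (b.repr (WithLp.toLp 2 x) j)^2
            = ∑ j, hA.eigenvalues j * (b.repr (WithLp.toLp 2 x) j)^2 - ∑ j, t * (b.repr (WithLp.toLp 2 x) j)^2 := by
          rw [← Finset.sum_sub_distrib]; congr 1; ext j; ring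
        rw [h2, ← h3, sub_eq_zero]
      exact (Finset.sum_eq_zero_iff_of_nonneg fun j _ =>
        mul_nonneg (by linarith [hmin j]) (sq_nonneg _)).mp hsum0
    have key : ∀ j, hA.eigenvalues j * b.repr (WithLp.toLp 2 x) j = t * b.repr (WithLp.toLp 2 x) j := by
      intro j
      have h4 := hzero j (mem_univ j)
      rcases mul_eq_zero.mp h4 with h | h
      · rw [show hA.eigenvalues j = t from by linarith]
      · rw [pow_eq_zero_iff (by norm_num)] at h
        rw [h, mul_zero, mul_zero]
    conv_lhs => rw [← hsum x, mulVec_sum']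
    conv_rhs => rw [← hsum x, Finset.smul_sum]
    refine Finset.sum_congr rfl fun j _ => ?_
    rw [Matrix.mulVec_smul, heig j]
    simp only [smul_smul]
    rw [mul_comm (b.repr (WithLp.toLp 2 x) j), key j, mul_comm t]

namespace Aux

/-- structural iterate -/
def natExt : ℕ → RootedGraph
  | 0 => F1
  | n+1 => (natExt n).extend 0

lemma natExt_nonempty : ∀ n, Nonempty (natExt n).V
  | 0 => ⟨(2 : Fin 4)⟩
  | n+1 => (natExt_nonempty n).elim fun v => ⟨Sum.inl v⟩

lemma rowing_eq (n : ℕ) : F1.rowing (List.replicate n 0) = natExt n := by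
  induction n with
  | zero => rfl
  | succ n ih =>
    rw [List.replicate_succ', RootedGraph.rowing, List.foldl_append]
    show RootedGraph.extend (F1.rowing (List.replicate n 0)) 0 = _
    rw [ih]
    rfl

/-- every vertex of `Option (Fin 0)` is `none` -/
lemma option_fin0 (o : Option (Fin 0)) : o = none := by
  cases o with
  | none => rfl
  | some a => exact a.elim0

lemma extend_mulVec (F : RootedGraph) (x : (F.extend 0).V → ℝ) (v : (F.extend 0).V) :
    (F.extend 0).adjMat.mulVec x v =
      Sum.elim
        (fun u => F.adjMat.mulVec (x ∘ Sum.inl) u + (if u = F.root then x (Sum.inr none) else 0))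
        (fun _ => x (Sum.inl F.root)) v := by
  classical
  cases v with
  | inl u =>
    show ∑ w : F.V ⊕ Option (Fin 0), _ = _
    rw [Fintype.sum_sum_type]
    simp only [Fintype.sum_option]
    have h1 : ∀ w : F.V, (F.extend 0).adjMat (Sum.inl u) (Sum.inl w) = F.adjMat u w := by
      intro w
      simp only [RootedGraph.adjMat, RootedGraph.extend, Matrix.of_apply]
      rfl
    have h2 : (F.extend 0).adjMat (Sum.inl u) (Sum.inr none) = if u = F.root then 1 else 0 := by
      simp only [RootedGraph.adjMat, RootedGraph.extend, Matrix.of_apply]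
      rfl
    simp only [h1, h2]
    show (∑ w : F.V, F.adjMat u w * x (Sum.inl w)) +
        ((if u = F.root then 1 else 0) * x (Sum.inr none) + ∑ b : Fin 0, _) = _
    rw [Finset.sum_congr (Finset.univ_eq_empty (α := Fin 0)) (fun _ _ => rfl), Finset.sum_empty]
    simp only [Sum.elim_inl, ite_mul, one_mul, zero_mul, add_zero]
    rfl
  | inr o =>
    rw [option_fin0 o]
    show ∑ w : F.V ⊕ Option (Fin 0), _ = _
    rw [Fintype.sum_sum_type]
    simp only [Fintype.sum_option]
    have h1 : ∀ w : F.V, (F.extend 0).adjMat (Sum.inr none) (Sum.inl w)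
        = if w = F.root then 1 else 0 := by
      intro w
      simp only [RootedGraph.adjMat, RootedGraph.extend, Matrix.of_apply]
      rfl
    have h2 : (F.extend 0).adjMat (Sum.inr none) (Sum.inr none) = 0 := by
      simp only [RootedGraph.adjMat, RootedGraph.extend, Matrix.of_apply]
      exact if_neg (fun h => h rfl)
    simp only [h1, h2]
    show (∑ w : F.V, (if w = F.root then 1 else 0) * x (Sum.inl w)) +
        (0 * x (Sum.inr none) + ∑ b : Fin 0, _) = _
    rw [Finset.sum_congr (Finset.univ_eq_empty (α := Fin 0)) (fun _ _ => rfl), Finset.sum_empty]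
    simp [Finset.sum_ite_eq']


lemma adjMat_isHermitian (F : RootedGraph) : F.adjMat.IsHermitian := by
  ext u v
  simp only [RootedGraph.adjMat, Matrix.conjTranspose_apply, Matrix.of_apply, star_trivial]
  by_cases h : F.G.Adj v u
  · rw [if_pos h, if_pos h.symm]
  · rw [if_neg h, if_neg fun h' => h h'.symm]

lemma lam1_spec (F : RootedGraph) (hne : Nonempty F.V) :
    (∃ x : F.V → ℝ, x ≠ 0 ∧ F.adjMat.mulVec x = F.lam1 • x) ∧
    (∀ s : ℝ, ∀ x : F.V → ℝ, x ≠ 0 → F.adjMat.mulVec x = s • x → F.lam1 ≤ s) ∧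
    (∀ x : F.V → ℝ, F.lam1 * (x ⬝ᵥ x) ≤ x ⬝ᵥ (F.adjMat.mulVec x)) ∧
    (∀ x : F.V → ℝ, x ⬝ᵥ (F.adjMat.mulVec x) = F.lam1 * (x ⬝ᵥ x) →
      F.adjMat.mulVec x = F.lam1 • x) := by
  classical
  obtain ⟨t, h1, h2, h3, h4⟩ := exists_min_eigen F.adjMat (adjMat_isHermitian F)
  have hSet : F.lam1 = t := by
    unfold RootedGraph.lam1
    apply le_antisymm
    · exact csInf_le ⟨t, fun s hs => h2 s hs.choose hs.choose_spec.1 hs.choose_spec.2⟩ h1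
    · exact le_csInf ⟨t, h1⟩ fun s hs => h2 s hs.choose hs.choose_spec.1 hs.choose_spec.2
  rw [hSet]
  exact ⟨h1, h2, h3, h4⟩


lemma F1_mulVec (x : Fin 4 → ℝ) :
    F1.adjMat.mulVec x = fun i => ![x 1, x 0 + x 2, x 1 + x 3, x 2] i := by
  funext i
  show ∑ j : Fin 4, F1.adjMat i j * x j = _
  rw [Fin.sum_univ_four]
  have adj : ∀ a b : Fin 4, F1.G.Adj a b ↔ (a.val + 1 = b.val ∨ b.val + 1 = a.val) := by
    intro a b
    exact SimpleGraph.pathGraph_adj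
  have entry : ∀ a b : F1.V, F1.adjMat a b = if (a.val + 1 = b.val ∨ b.val + 1 = a.val) then 1 else 0 := by
    intro a b
    simp only [RootedGraph.adjMat, Matrix.of_apply, adj]
    exact if_congr (adj a b) rfl rfl
  erw [entry, entry, entry, entry]
  fin_cases i <;> norm_num [show ((0:Fin 4):ℕ) = 0 from rfl, show ((1:Fin 4):ℕ) = 1 from rfl, show ((2:Fin 4):ℕ) = 2 from rfl, show ((3:Fin 4):ℕ) = 3 from rfl]


noncomputable section Param

variable (μ : ℝ)

def Lm : ℝ := μ + μ⁻¹
def Dm : ℝ := Lm μ ^ 2 - 1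

variable {μ}

lemma hL (hμ : 1 < μ) : 2 < Lm μ := by
  have h0 : 0 < μ := by linarith
  have hm1 : 0 < μ - 1 := by linarith
  have : μ + μ⁻¹ - 2 = (μ - 1)^2 / μ := by field_simp; ring
  have h1 : 0 < (μ - 1)^2 / μ := div_pos (by positivity) h0
  unfold Lm; linarith
lemma hD (hμ : 1 < μ) : 3 < Dm μ := by
  have := hL hμ; unfold Dm; nlinarith
lemma hLne (hμ : 1 < μ) : Lm μ ≠ 0 := by have := hL hμ; linarith
lemma hDne (hμ : 1 < μ) : Dm μ ≠ 0 := by have := hD hμ; linarith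
lemma hμne (hμ : 1 < μ) : μ ≠ 0 := by linarith
lemma hr01 (hμ : 1 < μ) : 0 < μ⁻¹ ∧ μ⁻¹ < 1 := by
  constructor
  · exact inv_pos.mpr (by linarith)
  · exact inv_lt_one_of_one_lt₀ hμ

/-- the root identity -/
lemma root_identity (hμ : 1 < μ) (h6 : μ^6 = μ^2 + 1) :
    Lm μ / Dm μ + 1 / Lm μ = Lm μ - μ⁻¹ := by
  have hm : (0:ℝ) < μ := by linarith
  have hL' : Lm μ = (μ^2+1)/μ := by unfold Lm; field_simp
  have hD' : Dm μ = (μ^4+μ^2+1)/μ^2 := by unfold Dm Lm; field_simp; ring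
  have h1 : μ^2+1 ≠ 0 := by positivity
  have h2 : μ^4+μ^2+1 ≠ 0 := by positivity
  have h3 : μ ≠ 0 := by positivity
  rw [hL', hD']
  field_simp
  linear_combination (-μ^2) * h6

variable (μ)

def yv : (n : ℕ) → (natExt n).V → ℝ
  | 0 => fun i : Fin 4 => ![1/(Dm μ), Lm μ/(Dm μ), 1, 1/(Lm μ)] i
  | n+1 => Sum.elim (yv n) fun _ => (μ⁻¹)^(n+1)

def xv : (n : ℕ) → (natExt n).V → ℝ
  | 0 => fun i : Fin 4 => ![1/(Dm μ), -(Lm μ)/(Dm μ), 1, -(1/(Lm μ))] i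
  | n+1 => Sum.elim (xv n) fun _ => (-μ⁻¹)^(n+1)

variable {μ}

lemma yv_root : ∀ n, yv μ n ((natExt n).root) = (μ⁻¹)^n
  | 0 => by show (![1/(Dm μ), Lm μ/(Dm μ), 1, 1/(Lm μ)] : Fin 4 → ℝ) 2 = 1; rfl
  | n+1 => by show (μ⁻¹)^(n+1) = (μ⁻¹)^(n+1); rfl

lemma xv_root : ∀ n, xv μ n ((natExt n).root) = (-μ⁻¹)^n
  | 0 => by show (![1/(Dm μ), -(Lm μ)/(Dm μ), 1, -(1/(Lm μ))] : Fin 4 → ℝ) 2 = 1; rfl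
  | n+1 => by rfl

lemma yv_pos (hμ : 1 < μ) : ∀ n, ∀ v, 0 < yv μ n v
  | 0 => by
    intro v
    have h1 := hL hμ; have h2 := hD hμ
    show 0 < (![1/(Dm μ), Lm μ/(Dm μ), 1, 1/(Lm μ)] : Fin 4 → ℝ) v
    fin_cases v <;> norm_num <;> positivity
  | n+1 => by
    rintro (u | o)
    · exact yv_pos hμ n u
    · show 0 < (μ⁻¹)^(n+1)
      have := (hr01 hμ).1; positivity

lemma mulVec_yv (hμ : 1 < μ) (h6 : μ^6 = μ^2 + 1) :
    ∀ n, (natExt n).adjMat.mulVec (yv μ n)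
      = fun v => Lm μ * yv μ n v - (if v = (natExt n).root then (μ⁻¹)^(n+1) else 0)
  | 0 => by
    have hLn := hLne hμ
    have hDn := hDne hμ
    have hri := root_identity hμ h6
    show F1.adjMat.mulVec (yv μ 0) = _
    rw [show yv μ 0 = fun i : Fin 4 => ![1/(Dm μ), Lm μ/(Dm μ), 1, 1/(Lm μ)] i from rfl, F1_mulVec]
    funext v
    fin_cases v
    · erw [if_neg (show ¬ ((⟨0, by norm_num⟩ : (natExt 0).V) = (natExt 0).root) from fun h => absurd (congrArg Fin.val h) (by decide))]
      norm_num
      field_simp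
    · erw [if_neg (show ¬ ((⟨1, by norm_num⟩ : (natExt 0).V) = (natExt 0).root) from fun h => absurd (congrArg Fin.val h) (by decide))]
      norm_num
      erw [show ∀ a b c d : ℝ, (![a, b, c, d] : Fin 4 → ℝ) 2 = c from fun _ _ _ _ => rfl]
      field_simp
      unfold Dm
      ring
    · erw [if_pos (show ((⟨2, by norm_num⟩ : (natExt 0).V) = (natExt 0).root) from rfl)]
      norm_num
      erw [show ∀ a b c d : ℝ, (![a, b, c, d] : Fin 4 → ℝ) 3 = d from fun _ _ _ _ => rfl]
      rw [inv_eq_one_div (Lm μ)]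
      linarith [root_identity hμ h6]
    · erw [if_neg (show ¬ ((⟨3, by norm_num⟩ : (natExt 0).V) = (natExt 0).root) from fun h => absurd (congrArg Fin.val h) (by decide))]
      norm_num
      erw [show ∀ a b c d : ℝ, (![a, b, c, d] : Fin 4 → ℝ) 2 = c from fun _ _ _ _ => rfl]
      field_simp
  | n+1 => by
    have hm := hμne hμ
    have ih := mulVec_yv hμ h6 n
    funext v
    show (((natExt n).extend 0).adjMat.mulVec (yv μ (n+1))) v = _
    rw [extend_mulVec (natExt n) (yv μ (n+1)) v]
    have hcomp : (yv μ (n+1)) ∘ Sum.inl = yv μ n := rfl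
    have hy1 : yv μ (n+1) (Sum.inr none) = (μ⁻¹)^(n+1) := rfl
    cases v with
    | inl u =>
      simp only [Sum.elim_inl]
      erw [hcomp, ih]
      simp only []
      have hne : (Sum.inl u : (natExt (n+1)).V) ≠ (natExt (n+1)).root := by
        intro h; exact Sum.inl_ne_inr (show (Sum.inl u : (natExt n).V ⊕ Option (Fin 0)) = Sum.inr none from h)
      erw [if_neg hne]
      have hy2 : yv μ (n+1) (Sum.inl u) = yv μ n u := rfl
      rw [hy1, hy2]
      ring
    | inr o =>
      rw [option_fin0 o]
      simp only [Sum.elim_inr]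
      have hroot : (Sum.inr none : (natExt (n+1)).V) = (natExt (n+1)).root := rfl
      erw [if_pos hroot]
      have hy2 : yv μ (n+1) (Sum.inl (natExt n).root) = (μ⁻¹)^n := yv_root n
      rw [hy1, hy2]
      unfold Lm
      field_simp
      linear_combination (μ⁻¹ * μ⁻¹^n - μ * μ⁻¹^n) * mul_inv_cancel₀ hm

lemma mulVec_xv (hμ : 1 < μ) (h6 : μ^6 = μ^2 + 1) :
    ∀ n, (natExt n).adjMat.mulVec (xv μ n)
      = fun v => -(Lm μ) * xv μ n v + (if v = (natExt n).root then (-1:ℝ)^n * (μ⁻¹)^(n+1) else 0)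
  | 0 => by
    have hLn := hLne hμ
    have hDn := hDne hμ
    have hri := root_identity hμ h6
    show F1.adjMat.mulVec (xv μ 0) = _
    rw [show xv μ 0 = fun i : Fin 4 => ![1/(Dm μ), -(Lm μ)/(Dm μ), 1, -(1/(Lm μ))] i from rfl, F1_mulVec]
    funext v
    fin_cases v
    · erw [if_neg (show ¬ ((⟨0, by norm_num⟩ : (natExt 0).V) = (natExt 0).root) from fun h => absurd (congrArg Fin.val h) (by decide))]
      norm_num
      field_simp
    · erw [if_neg (show ¬ ((⟨1, by norm_num⟩ : (natExt 0).V) = (natExt 0).root) from fun h => absurd (congrArg Fin.val h) (by decide))]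
      norm_num
      erw [show ∀ a b c d : ℝ, (![a, b, c, d] : Fin 4 → ℝ) 2 = c from fun _ _ _ _ => rfl]
      field_simp
      unfold Dm
      ring
    · erw [if_pos (show ((⟨2, by norm_num⟩ : (natExt 0).V) = (natExt 0).root) from rfl)]
      norm_num
      erw [show ∀ a b c d : ℝ, (![a, b, c, d] : Fin 4 → ℝ) 3 = d from fun _ _ _ _ => rfl]
      rw [inv_eq_one_div (Lm μ), neg_div]
      linarith [root_identity hμ h6]
    · erw [if_neg (show ¬ ((⟨3, by norm_num⟩ : (natExt 0).V) = (natExt 0).root) from fun h => absurd (congrArg Fin.val h) (by decide))]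
      norm_num
      erw [show ∀ a b c d : ℝ, (![a, b, c, d] : Fin 4 → ℝ) 2 = c from fun _ _ _ _ => rfl]
      field_simp
  | n+1 => by
    have hm := hμne hμ
    have ih := mulVec_xv hμ h6 n
    funext v
    show (((natExt n).extend 0).adjMat.mulVec (xv μ (n+1))) v = _
    rw [extend_mulVec (natExt n) (xv μ (n+1)) v]
    have hcomp : (xv μ (n+1)) ∘ Sum.inl = xv μ n := rfl
    have hy1 : xv μ (n+1) (Sum.inr none) = (-μ⁻¹)^(n+1) := rfl
    cases v with
    | inl u =>
      simp only [Sum.elim_inl]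
      erw [hcomp, ih]
      simp only []
      have hne : (Sum.inl u : (natExt (n+1)).V) ≠ (natExt (n+1)).root := by
        intro h; exact Sum.inl_ne_inr (show (Sum.inl u : (natExt n).V ⊕ Option (Fin 0)) = Sum.inr none from h)
      erw [if_neg hne]
      have hy2 : xv μ (n+1) (Sum.inl u) = xv μ n u := rfl
      rw [hy1, hy2]
      by_cases hu : u = (natExt n).root
      · rw [if_pos hu, if_pos hu]
        ring
      · rw [if_neg hu, if_neg hu]
        ring
    | inr o =>
      rw [option_fin0 o]
      simp only [Sum.elim_inr]
      have hroot : (Sum.inr none : (natExt (n+1)).V) = (natExt (n+1)).root := rfl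
      erw [if_pos hroot]
      have hy2 : xv μ (n+1) (Sum.inl (natExt n).root) = (-μ⁻¹)^n := xv_root n
      rw [hy1, hy2]
      unfold Lm
      field_simp
      linear_combination (μ⁻¹ * μ⁻¹^n - μ * μ⁻¹^n) * (-1:ℝ)^n * mul_inv_cancel₀ hm

lemma xv_dot_ge_one (hμ : 1 < μ) : ∀ n, 1 ≤ (xv μ n) ⬝ᵥ (xv μ n)
  | 0 => by
    have h := sq_nonneg (1/(Dm μ))
    have h2 := sq_nonneg (Lm μ/(Dm μ))
    have h3 := sq_nonneg (1/(Lm μ))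
    show 1 ≤ ∑ i : Fin 4, xv μ 0 i * xv μ 0 i
    rw [Fin.sum_univ_four]
    show 1 ≤ 1/(Dm μ) * (1/(Dm μ)) + -(Lm μ)/(Dm μ) * (-(Lm μ)/(Dm μ)) + 1 * 1 + -(1/(Lm μ)) * (-(1/(Lm μ)))
    nlinarith [sq_nonneg (1/(Dm μ)), sq_nonneg (Lm μ/(Dm μ)), sq_nonneg (1/(Lm μ))]
  | n+1 => by
    have ih := xv_dot_ge_one hμ n
    show 1 ≤ (Sum.elim (xv μ n) (fun _ => (-μ⁻¹)^(n+1) : Option (Fin 0) → ℝ)) ⬝ᵥ (Sum.elim (xv μ n) (fun _ => (-μ⁻¹)^(n+1)))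
    rw [sumElim_dotProduct_sumElim]
    have h2 : (0:ℝ) ≤ (fun _ => (-μ⁻¹)^(n+1) : Option (Fin 0) → ℝ) ⬝ᵥ (fun _ => (-μ⁻¹)^(n+1)) := by
      unfold dotProduct
      apply Finset.sum_nonneg
      intro i _
      exact mul_self_nonneg _
    linarith

lemma adjMat_transpose (F : RootedGraph) : F.adjMatᵀ = F.adjMat := by
  have h := (adjMat_isHermitian F).eq
  ext i j
  have := congrFun (congrFun h i) j
  simpa [Matrix.conjTranspose_apply] using this

lemma adjMat_nonneg (F : RootedGraph) (u v : F.V) : 0 ≤ F.adjMat u v := by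
  simp only [RootedGraph.adjMat, Matrix.of_apply]
  split <;> norm_num

lemma lam1_lower (hμ : 1 < μ) (h6 : μ^6 = μ^2 + 1) (n : ℕ) :
    -(Lm μ) ≤ (natExt n).lam1 := by
  obtain ⟨⟨w, hw0, hw⟩, -, -, -⟩ := lam1_spec (natExt n) (natExt_nonempty n)
  set A := (natExt n).adjMat
  set t := (natExt n).lam1
  set y := yv μ n
  set p : (natExt n).V → ℝ := fun v => |w v|
  have hAy := mulVec_yv hμ h6 n
  have hppos : ∀ v, 0 ≤ p v := fun v => abs_nonneg _
  have hyp : ∀ v, 0 < y v := yv_pos hμ n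
  -- pointwise bound
  have hpoint : ∀ v, |t| * p v ≤ (A.mulVec p) v := by
    intro v
    have h1 : |t * w v| = |t| * p v := abs_mul t (w v)
    have h2 : (A.mulVec w) v = t * w v := by rw [hw]; rfl
    have h3 : |(A.mulVec w) v| ≤ (A.mulVec p) v := by
      show |∑ u, A v u * w u| ≤ ∑ u, A v u * p u
      refine le_trans (Finset.abs_sum_le_sum_abs _ _) (Finset.sum_le_sum fun u _ => ?_)
      rw [abs_mul, abs_of_nonneg (adjMat_nonneg _ v u)]
    rw [← h1, ← h2]
    exact h3
  have hyppos : 0 < y ⬝ᵥ p := by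
    obtain ⟨v, hv⟩ := Function.ne_iff.mp hw0
    refine Finset.sum_pos' (fun u _ => mul_nonneg (le_of_lt (hyp u)) (hppos u)) ⟨v, Finset.mem_univ v, ?_⟩
    have : 0 < p v := abs_pos.mpr hv
    exact mul_pos (hyp v) this
  have step1 : |t| * (y ⬝ᵥ p) ≤ y ⬝ᵥ (A.mulVec p) := by
    show |t| * (∑ v, y v * p v) ≤ ∑ v, y v * (A.mulVec p) v
    rw [Finset.mul_sum]
    refine Finset.sum_le_sum fun v _ => ?_
    calc |t| * (y v * p v) = y v * (|t| * p v) := by ring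
      _ ≤ y v * (A.mulVec p) v := mul_le_mul_of_nonneg_left (hpoint v) (le_of_lt (hyp v))
  have step2 : y ⬝ᵥ (A.mulVec p) = (A.mulVec y) ⬝ᵥ p := by
    rw [Matrix.dotProduct_mulVec, ← Matrix.mulVec_transpose, adjMat_transpose]
  have step3 : (A.mulVec y) ⬝ᵥ p ≤ Lm μ * (y ⬝ᵥ p) := by
    rw [hAy]
    show ∑ v, (Lm μ * yv μ n v - (if v = (natExt n).root then (μ⁻¹)^(n+1) else 0)) * p v
        ≤ Lm μ * ∑ v, y v * p v
    rw [Finset.mul_sum]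
    refine Finset.sum_le_sum fun v _ => ?_
    have hd : 0 ≤ (if v = (natExt n).root then (μ⁻¹)^(n+1) else 0) := by
      split
      · positivity
      · exact le_refl 0
    nlinarith [hppos v]
  have habs : |t| ≤ Lm μ := by
    have := le_trans step1 (le_of_eq step2)
    have h4 := le_trans this step3
    exact le_of_mul_le_mul_right (by linarith [h4]) hyppos
  calc -(Lm μ) ≤ -|t| := neg_le_neg habs
    _ ≤ t := neg_abs_le t

lemma lam1_upper (hμ : 1 < μ) (h6 : μ^6 = μ^2 + 1) (n : ℕ) :
    (natExt n).lam1 ≤ -(Lm μ) + (μ⁻¹)^(2*n+1) := by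
  obtain ⟨-, -, hray, -⟩ := lam1_spec (natExt n) (natExt_nonempty n)
  set A := (natExt n).adjMat
  set t := (natExt n).lam1 with ht
  set x := xv μ n
  have hAx := mulVec_xv hμ h6 n
  have hdot : x ⬝ᵥ (A.mulVec x) = -(Lm μ) * (x ⬝ᵥ x) + (μ⁻¹)^(2*n+1) := by
    rw [hAx]
    show ∑ v, x v * (-(Lm μ) * x v + (if v = (natExt n).root then (-1:ℝ)^n * (μ⁻¹)^(n+1) else 0)) = _
    have hsplit : ∀ v, x v * (-(Lm μ) * x v + (if v = (natExt n).root then (-1:ℝ)^n * (μ⁻¹)^(n+1) else 0))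
        = -(Lm μ) * (x v * x v) + (if v = (natExt n).root then x v * ((-1:ℝ)^n * (μ⁻¹)^(n+1)) else 0) := by
      intro v
      split <;> ring
    rw [Finset.sum_congr rfl fun v _ => hsplit v, Finset.sum_add_distrib, ← Finset.mul_sum,
      Finset.sum_ite_eq' Finset.univ ((natExt n).root)]
    rw [if_pos (Finset.mem_univ _)]
    have hx : x ((natExt n).root) = (-μ⁻¹)^n := xv_root n
    rw [hx]
    have : ((-μ⁻¹ : ℝ))^n * ((-1:ℝ)^n * (μ⁻¹)^(n+1)) = (μ⁻¹)^(2*n+1) := by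
      rw [neg_pow]
      have h1 : ((-1:ℝ))^n * (-1:ℝ)^n = 1 := by
        rw [← pow_add]
        exact Even.neg_one_pow ⟨n, rfl⟩
      calc (-1:ℝ)^n * (μ⁻¹)^n * ((-1:ℝ)^n * (μ⁻¹)^(n+1))
          = ((-1:ℝ)^n * (-1:ℝ)^n) * ((μ⁻¹)^n * (μ⁻¹)^(n+1)) := by ring
        _ = (μ⁻¹)^n * (μ⁻¹)^(n+1) := by rw [h1, one_mul]
        _ = (μ⁻¹)^(2*n+1) := by rw [← pow_add]; congr 1; omega
    rw [this]
    rfl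
  have hone := xv_dot_ge_one hμ n
  have hlow := lam1_lower hμ h6 n
  have hray2 := hray x
  rw [hdot] at hray2
  -- (t + Lm) * (x ⬝ᵥ x) ≤ r^(2n+1)
  have h5 : (t + Lm μ) * (x ⬝ᵥ x) ≤ (μ⁻¹)^(2*n+1) := by nlinarith
  have h6' : (t + Lm μ) ≤ (t + Lm μ) * (x ⬝ᵥ x) := by nlinarith
  linarith

lemma zero_prop : ∀ n, ∀ t : ℝ, t ≠ 0 → ∀ w : (natExt n).V → ℝ,
    (natExt n).adjMat.mulVec w = t • w → w ((natExt n).root) = 0 → w = 0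
  | 0 => by
    intro t ht w hw hroot
    have hz : ∀ w' : Fin 4 → ℝ, F1.adjMat.mulVec w' = t • w' → w' 2 = 0 → w' = 0 := by
      clear hw hroot w
      intro w hw' hroot
      rw [F1_mulVec] at hw'
      have h := fun i => congrFun hw' i
      have e0 := h 0
      have e1 := h 1
      have e2 := h 2
      have e3 := h 3
      simp only [Pi.smul_apply, smul_eq_mul, Matrix.cons_val_zero, Matrix.cons_val_one,
        Matrix.head_cons] at e0 e1 e2 e3
      have hw2 : w 2 = 0 := hroot
      have hw3 : w 3 = 0 := by
        have : w 2 = t * w 3 := e3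
        rw [hw2] at this
        rcases mul_eq_zero.mp this.symm with h' | h'
        · exact absurd h' ht
        · exact h'
      have hw1 : w 1 = 0 := by
        have : w 1 + w 3 = t * w 2 := e2
        rw [hw2, hw3] at this
        linarith [this]
      have hw0 : w 0 = 0 := by
        have : w 1 = t * w 0 := e0
        rw [hw1] at this
        rcases mul_eq_zero.mp this.symm with h' | h'
        · exact absurd h' ht
        · exact h'
      funext i
      fin_cases i <;> assumption
    exact hz w hw hroot
  | n+1 => by
    intro t ht w hw hroot
    have hroot' : w (Sum.inr none) = 0 := hroot
    have h := fun v => congrFun hw v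
    have hv : ∀ v, (((natExt n).extend 0).adjMat.mulVec w) v = t * w v := fun v => h v
    have h2 : ∀ v, (Sum.elim
        (fun u => (natExt n).adjMat.mulVec (w ∘ Sum.inl) u + (if u = (natExt n).root then w (Sum.inr none) else 0))
        (fun _ => w (Sum.inl (natExt n).root)) : (natExt (n+1)).V → ℝ) v = t * w v := by
      intro v
      erw [← extend_mulVec (natExt n) w v]
      exact hv v
    -- at the new root
    have hR : w (Sum.inl ((natExt n).root)) = 0 := by
      have := h2 (Sum.inr none)
      simp only [Sum.elim_inr] at this
      rw [hroot', mul_zero] at this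
      exact this
    -- restricted eigen equation
    have hres : (natExt n).adjMat.mulVec (w ∘ Sum.inl) = t • (w ∘ Sum.inl) := by
      funext u
      have := h2 (Sum.inl u)
      simp only [Sum.elim_inl] at this
      rw [hroot'] at this
      have hz : (if u = (natExt n).root then (0:ℝ) else 0) = 0 := ite_self 0
      rw [hz, add_zero] at this
      exact this
    have hwin := zero_prop n t ht (w ∘ Sum.inl) hres hR
    funext v
    cases v with
    | inl u => exact congrFun hwin u
    | inr o => rw [option_fin0 o]; exact hroot'

lemma lam1_neg (hμ : 1 < μ) (h6 : μ^6 = μ^2 + 1) (n : ℕ) : (natExt n).lam1 < -1 := by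
  have h1 := lam1_upper hμ h6 n
  have h2 := hL hμ
  have h3 := hr01 hμ
  have h4 : (μ⁻¹)^(2*n+1) ≤ 1 := pow_le_one₀ (le_of_lt h3.1) (le_of_lt h3.2)
  linarith

lemma lam1_succ_lt (hμ : 1 < μ) (h6 : μ^6 = μ^2 + 1) (n : ℕ) :
    (natExt (n+1)).lam1 < (natExt n).lam1 := by
  obtain ⟨⟨w, hw0, hw⟩, -, -, -⟩ := lam1_spec (natExt n) (natExt_nonempty n)
  obtain ⟨-, -, hray', heq'⟩ := lam1_spec (natExt (n+1)) (natExt_nonempty (n+1))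
  set t := (natExt n).lam1 with htdef
  set t' := (natExt (n+1)).lam1 with ht'def
  set w' : (natExt (n+1)).V → ℝ := Sum.elim w (fun _ => 0) with hw'def
  have hww : 0 < w ⬝ᵥ w := by
    obtain ⟨v, hv⟩ := Function.ne_iff.mp hw0
    exact Finset.sum_pos' (fun u _ => mul_self_nonneg _)
      ⟨v, Finset.mem_univ v, mul_self_pos.mpr hv⟩
  have hcomp : w' ∘ Sum.inl = w := rfl
  have hinr : w' (Sum.inr none) = 0 := rfl
  have hA'w' : (natExt (n+1)).adjMat.mulVec w'
      = Sum.elim (fun u => ((natExt n).adjMat.mulVec w) u) (fun _ => w ((natExt n).root)) := by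
    funext v
    have h1 : (((natExt n).extend 0).adjMat.mulVec w') v = _ := extend_mulVec (natExt n) w' v
    refine h1.trans ?_
    cases v with
    | inl u =>
      simp only [Sum.elim_inl, hcomp, hinr, ite_self, add_zero]
      rfl
    | inr o =>
      simp only [Sum.elim_inr]
      rfl
  have hdots : w' ⬝ᵥ w' = w ⬝ᵥ w := by
    erw [hw'def, sumElim_dotProduct_sumElim]
    have : (fun _ => (0:ℝ) : Option (Fin 0) → ℝ) ⬝ᵥ (fun _ => (0:ℝ)) = 0 := by
      unfold dotProduct; simp
    rw [this, add_zero]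
  have hdotA : w' ⬝ᵥ ((natExt (n+1)).adjMat.mulVec w') = t * (w ⬝ᵥ w) := by
    erw [hA'w', hw'def, sumElim_dotProduct_sumElim]
    have h0 : (fun _ => (0:ℝ) : Option (Fin 0) → ℝ) ⬝ᵥ (fun _ => w ((natExt n).root)) = 0 := by
      unfold dotProduct; simp
    rw [h0, add_zero, hw, dotProduct_smul, smul_eq_mul]
  have hweak : t' ≤ t := by
    have := hray' w'
    rw [hdotA, hdots] at this
    exact le_of_mul_le_mul_right (by linarith) hww
  rcases lt_or_eq_of_le hweak with h | h
  · exact h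
  · exfalso
    have heq2 : w' ⬝ᵥ ((natExt (n+1)).adjMat.mulVec w') = t' * (w' ⬝ᵥ w') := by
      rw [hdotA, hdots, h]
    have heig := heq' w' heq2
    have hz : w ((natExt n).root) = 0 := by
      have := congrFun heig (Sum.inr none)
      rw [hA'w'] at this
      simp only [Sum.elim_inr, Pi.smul_apply, smul_eq_mul] at this
      erw [show (t' • w') (Sum.inr none) = 0 from by show t' * w' (Sum.inr none) = 0; rw [hinr, mul_zero]] at this
      exact this
    have htne : t ≠ 0 := by
      have := lam1_neg hμ h6 n
      intro hc; rw [← htdef] at this; rw [hc] at this; linarith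
    exact hw0 (zero_prop n t htne w hw hz)

end Param

end Aux

/-- The sequence `n ↦ λ₁(F₁, 0ⁿ)` is strictly decreasing and converges to `-λ*`, where
`λ* = √ρ + 1/√ρ` and `ρ` is the unique real root of `x³ = x + 1`. -/
theorem lam1_rowing_F1_strictAnti_tendsto (ρ : ℝ) (hρ : ρ ^ 3 = ρ + 1) :
    StrictAnti (fun n : ℕ => (F1.rowing (List.replicate n 0)).lam1) ∧
    Filter.Tendsto (fun n : ℕ => (F1.rowing (List.replicate n 0)).lam1)
      Filter.atTop (nhds (-(Real.sqrt ρ + (Real.sqrt ρ)⁻¹))) := by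
  have hρ1 : 1 < ρ := by nlinarith [sq_nonneg ρ, sq_nonneg (ρ-1), sq_nonneg (ρ+1)]
  have hρ0 : (0:ℝ) ≤ ρ := by linarith
  set μ := Real.sqrt ρ with hμdef
  have hμ2 : μ^2 = ρ := Real.sq_sqrt hρ0
  have hμ : 1 < μ := by
    have h := Real.sqrt_lt_sqrt (by norm_num) hρ1
    simpa [Real.sqrt_one] using h
  have h6 : μ^6 = μ^2 + 1 := by
    have h : μ^6 = (μ^2)^3 := by ring
    rw [h, hμ2, hρ, ← hμ2]
  have hfun : (fun n : ℕ => (F1.rowing (List.replicate n 0)).lam1)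
      = fun n => (Aux.natExt n).lam1 := by
    funext n; rw [Aux.rowing_eq]
  rw [hfun]
  constructor
  · exact strictAnti_nat_of_succ_lt fun n => Aux.lam1_succ_lt hμ h6 n
  · have hr := Aux.hr01 hμ
    have hlow : ∀ n : ℕ, -(Aux.Lm μ) ≤ (Aux.natExt n).lam1 := Aux.lam1_lower hμ h6
    have hup : ∀ n : ℕ, (Aux.natExt n).lam1 ≤ -(Aux.Lm μ) + (μ⁻¹)^(2*n+1) :=
      Aux.lam1_upper hμ h6
    have h0 : Filter.Tendsto (fun n : ℕ => -(Aux.Lm μ) + (μ⁻¹)^(2*n+1))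
        Filter.atTop (nhds (-(Aux.Lm μ))) := by
      have h1 : Filter.Tendsto (fun n : ℕ => ((μ⁻¹)^2)^n) Filter.atTop (nhds 0) :=
        tendsto_pow_atTop_nhds_zero_of_lt_one (by positivity) (by nlinarith [hr.1, hr.2])
      have h2 : Filter.Tendsto (fun n : ℕ => (μ⁻¹)^(2*n+1)) Filter.atTop (nhds 0) := by
        have heq : (fun n : ℕ => (μ⁻¹)^(2*n+1)) = fun n : ℕ => μ⁻¹ * ((μ⁻¹)^2)^n := by
          funext n
          rw [pow_succ', pow_mul]
        rw [heq]
        simpa using h1.const_mul μ⁻¹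
      have h3 := h2.const_add (-(Aux.Lm μ))
      simpa using h3
    have hgoal : Filter.Tendsto (fun n : ℕ => (Aux.natExt n).lam1)
        Filter.atTop (nhds (-(Aux.Lm μ))) :=
      tendsto_of_tendsto_of_tendsto_of_le_of_le tendsto_const_nhds h0
        (fun n => hlow n) (fun n => hup n)
    exact hgoal
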